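/- arXiv:1912.00033 — 6 statements merged into one kernel-verified Lean document; each statement's English description precedes it below -/
import Mathlib

section
/- Let C be a bounded self-adjoint operator on a complex Hilbert space ℋ, let t_max > 0, and suppose the one-parameter unitary group U(t) := exp(−i t C) is projectively periodic: there exists λ ∈ ℂ with U(t_max) = λ·id. Let K be any bounded operator on ℋ and define the twirl over one period F := (1/t_max) ∫₀^{t_max} U(t)∘K∘U(t)⁻¹ dt. Then U(s)∘F = F∘U(s) for every s ∈ ℝ, and consequently C∘F = F∘C. (This is the compact-group version of Theorem 1: the G-twirl of a kinematical operator over the compact group generated by the constraint is a Dirac observable.) -/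
open MeasureTheory

/-- **Compact-group version of Theorem 1.**  Let `C` be a bounded self-adjoint operator on a
complex Hilbert space, `U t = exp(-i t C)` (so `U (-t)` is the inverse of `U t`), and suppose
`U` is projectively periodic with period `tmax > 0`, i.e. `U tmax = λ • id` for some `λ ∈ ℂ`.
Then for any bounded operator `K`, the twirl over one period
`F = (1/tmax) ∫₀^{tmax} U(t) K U(t)⁻¹ dt` commutes with every `U s` and with `C`. -/
theorem gTwirl_compact_invariant
    {H : Type*} [NormedAddCommGroup H] [InnerProductSpace ℂ H] [CompleteSpace H]
    (C : H →L[ℂ] H) (hC : IsSelfAdjoint C)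
    (tmax : ℝ) (htmax : 0 < tmax)
    (U : ℝ → (H →L[ℂ] H))
    (hU : ∀ t : ℝ, U t = NormedSpace.exp ((-(t : ℂ) * Complex.I) • C))
    (hper : ∃ lam : ℂ, U tmax = lam • (1 : H →L[ℂ] H))
    (K : H →L[ℂ] H)
    (F : H →L[ℂ] H)
    (hF : F = (1 / tmax) • ∫ t in (0:ℝ)..tmax, (U t).comp (K.comp (U (-t)))) :
    (∀ s : ℝ, (U s).comp F = F.comp (U s)) ∧ C.comp F = F.comp C := by
  obtain ⟨lam, hlam⟩ := hper
  let +nondep : NormedAlgebra ℚ (H →L[ℂ] H) := .restrictScalars ℚ ℂ _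
  set A : H →L[ℂ] H := (-Complex.I) • C with hA
  have hUA : ∀ t : ℝ, U t = NormedSpace.exp (t • A) := by
    intro t
    rw [hU, hA]
    congr 1
    rw [← smul_assoc]
    congr 1
    rw [Complex.real_smul]
    ring
  have hadd : ∀ a b : ℝ, U (a + b) = U a * U b := by
    intro a b
    rw [hUA, hUA, hUA, ← NormedSpace.exp_add_of_commute (((Commute.refl A).smul_left a).smul_right b)]
    congr 1
    rw [← add_smul]
  have hU0 : U 0 = 1 := by rw [hUA]; simp
  have hinv : ∀ t, U t * U (-t) = 1 := by
    intro t; rw [← hadd]; simp [hU0]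
  have hlam' : lam • U (-tmax) = 1 := by
    have h := hinv tmax
    rw [hlam, smul_mul_assoc, one_mul] at h
    exact h
  set f : ℝ → (H →L[ℂ] H) := fun t => U t * (K * U (-t)) with hf
  have hFeq : F = (1 / tmax) • ∫ t in (0:ℝ)..tmax, f t := hF
  have hUcont : Continuous U := by
    have h1 : Continuous fun t : ℝ => ((-(t:ℂ) * Complex.I) • C) :=
      ((Complex.continuous_ofReal.neg).mul continuous_const).smul continuous_const
    have : U = fun t : ℝ => NormedSpace.exp ((-(t : ℂ) * Complex.I) • C) := funext hU
    rw [this]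
    exact NormedSpace.exp_continuous.comp h1
  have hfcont : Continuous f :=
    hUcont.mul (continuous_const.mul (hUcont.comp continuous_neg))
  have hperiodic : Function.Periodic f tmax := by
    intro t
    show U (t + tmax) * (K * U (-(t + tmax))) = U t * (K * U (-t))
    have h2 : lam • (U (-tmax) * U (-t)) = U (-t) := by
      rw [← smul_mul_assoc, hlam', one_mul]
    rw [hadd, hlam, show -(t + tmax) = -tmax + -t by ring, hadd]
    conv_rhs => rw [← h2]
    simp only [mul_smul_comm, smul_mul_assoc, mul_one, mul_assoc]
  have key : ∀ s : ℝ, U s * F = F * U s := by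
    intro s
    rw [hFeq, mul_smul_comm, smul_mul_assoc]
    congr 1
    have hint : ∀ a b : ℝ, IntervalIntegrable f volume a b :=
      fun a b => hfcont.intervalIntegrable a b
    have hL : U s * (∫ t in (0:ℝ)..tmax, f t) = ∫ t in (0:ℝ)..tmax, U s * f t :=
      ((ContinuousLinearMap.mul ℂ (H →L[ℂ] H) (U s)).intervalIntegral_comp_comm (hint 0 tmax)).symm
    have hR : (∫ t in (0:ℝ)..tmax, f t) * U s = ∫ t in (0:ℝ)..tmax, f (t + s) * U s := by
      have : (∫ t in (0:ℝ)..tmax, f t) = ∫ t in (0:ℝ)..tmax, f (t + s) := by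
        rw [intervalIntegral.integral_comp_add_right f s, show (0:ℝ) + s = s from by ring,
          show tmax + s = s + tmax from by ring, hperiodic.intervalIntegral_add_eq s 0,
          zero_add]
      rw [this]
      have hint2 : IntervalIntegrable (fun t => f (t + s)) volume 0 tmax :=
        (hfcont.comp (continuous_id.add continuous_const)).intervalIntegrable 0 tmax
      exact (((ContinuousLinearMap.mul ℂ (H →L[ℂ] H)).flip (U s)).intervalIntegral_comp_comm
        hint2).symm
    rw [hL, hR]
    apply intervalIntegral.integral_congr
    intro t _
    show U s * (U t * (K * U (-t))) = U (t + s) * (K * U (-(t + s))) * U s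
    rw [← mul_assoc, ← hadd, mul_assoc, mul_assoc, ← hadd,
      show -(t + s) + s = -t by ring, add_comm s t]
  have hAC : A * F = F * A := by
    have hd : HasDerivAt U A 0 := by
      have h := hasDerivAt_exp_smul_const (𝕂 := ℝ) (𝔸 := H →L[ℂ] H) A (0 : ℝ)
      have hUeq : U = fun u : ℝ => NormedSpace.exp (u • A) := by
        funext u
        rw [hUA]
      rw [hUeq]
      simpa using h
    have h1 : HasDerivAt (fun s => U s * F) (A * F) 0 := hd.mul_const F
    have h2 : HasDerivAt (fun s => U s * F) (F * A) 0 := by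
      have : (fun s => U s * F) = fun s => F * U s := funext key
      rw [this]
      exact hd.const_mul F
    exact h1.unique h2
  have hCF : C * F = F * C := by
    have h : (-Complex.I) • (C * F) = (-Complex.I) • (F * C) := by
      rw [← smul_mul_assoc, ← mul_smul_comm, ← hA]
      exact hAC
    exact smul_right_injective _ (by simp [Complex.I_ne_zero]) h
  exact ⟨key, hCF⟩
end

section
/- Let ℋ be a nonzero finite-dimensional complex Hilbert space, H a self-adjoint operator on ℋ, and t_max > 0. The one-parameter unitary group U(t) := exp(−i t H) is projectively periodic with period t_max (i.e. there exists λ ∈ ℂ with U(t_max) = λ·id) if and only if there exists φ ∈ ℝ such that every eigenvalue ε of H has the form ε = (2π n + φ)/t_max for some integer n. (This is the paper's claim that the group generated by a clock Hamiltonian is compact if and only if the spectrum of the Hamiltonian is 'rational' in this sense.) -/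
open NormedSpace in
lemma exp_apply_eigenvec {H : Type*} [NormedAddCommGroup H] [InnerProductSpace ℂ H]
    [FiniteDimensional ℂ H] (A : H →L[ℂ] H) (v : H) (μ : ℂ) (h : A v = μ • v) :
    NormedSpace.exp A v = Complex.exp μ • v := by
  have hpow : ∀ n : ℕ, (A ^ n) v = μ ^ n • v := by
    intro n
    induction n with
    | zero => simp
    | succ n ih =>
        rw [pow_succ, ContinuousLinearMap.mul_apply, h, map_smul, ih, smul_smul]
        rw [pow_succ, mul_comm]
  have hsum : Summable fun n : ℕ => ((n.factorial : ℂ))⁻¹ • A ^ n :=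
    NormedSpace.expSeries_summable' (𝕂 := ℂ) A
  have h1 : NormedSpace.exp A v
      = (ContinuousLinearMap.apply ℂ H v) (∑' n : ℕ, ((n.factorial : ℂ))⁻¹ • A ^ n) := by
    rw [NormedSpace.exp_eq_tsum (𝕂 := ℂ)]; rfl
  rw [h1, (ContinuousLinearMap.apply ℂ H v).map_tsum hsum]
  have h2 : ∀ n : ℕ, (ContinuousLinearMap.apply ℂ H v) (((n.factorial : ℂ))⁻¹ • A ^ n)
      = (((n.factorial : ℂ))⁻¹ * μ ^ n) • v := by
    intro n
    simp [ContinuousLinearMap.apply, hpow n, smul_smul]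
  rw [tsum_congr h2, Summable.tsum_smul_const, Complex.exp_eq_exp_ℂ, NormedSpace.exp_eq_tsum (𝕂 := ℂ)]
  · simp [div_eq_inv_mul]
  · exact NormedSpace.expSeries_summable' (𝕂 := ℂ) μ

/-- **Compactness of the clock group ↔ rational spectrum.**  On a nonzero finite-dimensional
complex Hilbert space, for a self-adjoint operator `H` and `tmax > 0`, the one-parameter
unitary group `U t = exp(-i t H)` is projectively periodic with period `tmax`
(`U tmax = λ • id` for some `λ ∈ ℂ`) if and only if there exists `φ ∈ ℝ` such that every
eigenvalue `ε` of `H` has the form `ε = (2 π n + φ)/tmax` for some integer `n`. -/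
theorem clock_group_compact_iff_rational_spectrum
    {H : Type*} [NormedAddCommGroup H] [InnerProductSpace ℂ H]
    [FiniteDimensional ℂ H] [Nontrivial H]
    (Hop : H →L[ℂ] H) (hHop : IsSelfAdjoint Hop)
    (tmax : ℝ) (htmax : 0 < tmax) :
    (∃ lam : ℂ,
        NormedSpace.exp ((-(tmax : ℂ) * Complex.I) • Hop) = lam • (1 : H →L[ℂ] H))
      ↔ ∃ φ : ℝ, ∀ ε : ℝ, (∃ v : H, v ≠ 0 ∧ Hop v = (ε : ℂ) • v) →
          ∃ n : ℤ, ε = (2 * Real.pi * (n : ℝ) + φ) / tmax := by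
  have key : ∀ (ε : ℝ) (v : H), Hop v = (ε : ℂ) • v →
      NormedSpace.exp ((-(tmax : ℂ) * Complex.I) • Hop) v
        = Complex.exp (-(tmax : ℂ) * Complex.I * ε) • v := by
    intro ε v hv
    apply exp_apply_eigenvec
    rw [ContinuousLinearMap.smul_apply, hv, smul_smul]
  constructor
  · rintro ⟨lam, hlam⟩
    by_cases hex : ∃ ε₀ : ℝ, ∃ v : H, v ≠ 0 ∧ Hop v = (ε₀ : ℂ) • v
    · obtain ⟨ε₀, v₀, hv₀, hev₀⟩ := hex
      refine ⟨tmax * ε₀, ?_⟩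
      rintro ε ⟨v, hv, hev⟩
      have h0 : Complex.exp (-(tmax : ℂ) * Complex.I * ε₀) • v₀ = lam • v₀ := by
        rw [← key ε₀ v₀ hev₀, hlam]; rfl
      have h1 : Complex.exp (-(tmax : ℂ) * Complex.I * ε) • v = lam • v := by
        rw [← key ε v hev, hlam]; rfl
      have e0 : Complex.exp (-(tmax : ℂ) * Complex.I * ε₀) = lam :=
        smul_left_injective ℂ hv₀ h0
      have e1 : Complex.exp (-(tmax : ℂ) * Complex.I * ε) = lam :=
        smul_left_injective ℂ hv h1
      rw [← e0] at e1
      rw [Complex.exp_eq_exp_iff_exists_int] at e1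
      obtain ⟨n, hn⟩ := e1
      refine ⟨-n, ?_⟩
      have hI : (Complex.I : ℂ) ≠ 0 := Complex.I_ne_zero
      have : ((-(tmax * ε) : ℝ) : ℂ) = ((-(tmax * ε₀) + n * (2 * Real.pi) : ℝ) : ℂ) := by
        apply mul_right_cancel₀ hI
        push_cast
        linear_combination hn
      have hr : -(tmax * ε) = -(tmax * ε₀) + n * (2 * Real.pi) := by exact_mod_cast this
      field_simp
      push_cast
      linarith
    · exact ⟨0, fun ε hε => absurd ⟨ε, hε⟩ hex⟩
  · rintro ⟨φ, hφ⟩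
    refine ⟨Complex.exp (-(φ : ℂ) * Complex.I), ?_⟩
    have hsym := hHop.isSymmetric
    have hrank : Module.finrank ℂ H = Module.finrank ℂ H := rfl
    set N := Module.finrank ℂ H with hN
    let b := hsym.eigenvectorBasis hrank
    apply ContinuousLinearMap.coe_injective
    apply Module.Basis.ext b.toBasis
    intro i
    have hb : Hop (b i) = ((hsym.eigenvalues hrank i : ℝ) : ℂ) • b i :=
      hsym.apply_eigenvectorBasis hrank i
    have hbne : b i ≠ 0 := b.toBasis.ne_zero i
    obtain ⟨n, hn⟩ := hφ (hsym.eigenvalues hrank i) ⟨b i, hbne, hb⟩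
    have := key (hsym.eigenvalues hrank i) (b i) hb
    simp only [OrthonormalBasis.coe_toBasis, ContinuousLinearMap.coe_coe]
    rw [this, hn]
    have harg : -(tmax : ℂ) * Complex.I * (((2 * Real.pi * (n : ℝ) + φ) / tmax : ℝ) : ℂ)
        = -(φ : ℂ) * Complex.I + (-n : ℤ) * (2 * (Real.pi : ℂ) * Complex.I) := by
      have htne : (tmax : ℂ) ≠ 0 := by exact_mod_cast htmax.ne'
      push_cast
      field_simp
      ring
    rw [harg, Complex.exp_add, Complex.exp_int_mul_two_pi_mul_I]
    simp
end

section
/- In the finite-dimensional discrete-spectrum clock setup, the covariant clock states integrated over one period resolve the identity with normalization constant μ = 1/t_max: (1/t_max) ∫₀^{t_max} |t⟩⟨t| dt = id_{ℋ_C}, where the integral is the Bochner integral of the rank-one operator-valued function t ↦ |t⟩⟨t|. (This is the normalization condition E_T(G) = I_C of the covariant clock POVM for a discrete, non-degenerate, rational-spectrum clock Hamiltonian.) -/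
open MeasureTheory

noncomputable section

/-- The rank-one operator `|v⟩⟨w| : ψ ↦ ⟨w, ψ⟩ v` on a complex inner product space. -/
noncomputable def ketbra {H : Type*} [NormedAddCommGroup H] [InnerProductSpace ℂ H]
    (v w : H) : H →L[ℂ] H :=
  (ContinuousLinearMap.toSpanSingleton ℂ v).comp (innerSL ℂ w)

lemma ketbra_apply {H : Type*} [NormedAddCommGroup H] [InnerProductSpace ℂ H]
    (v w x : H) : ketbra v w x = (inner ℂ w x : ℂ) • v := rfl

lemma ketbra_expand {H : Type*} [NormedAddCommGroup H] [InnerProductSpace ℂ H]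
    {n : ℕ} (b : Fin n → H) (c d : Fin n → ℂ) :
    ketbra (∑ j, c j • b j) (∑ k, d k • b k)
      = ∑ j, ∑ k, (c j * (starRingEnd ℂ) (d k)) • ketbra (b j) (b k) := by
  ext x
  simp [ketbra_apply, inner_sum, sum_inner, inner_smul_left, Finset.smul_sum,
    Finset.sum_smul, Finset.mul_sum, smul_smul, mul_comm, mul_left_comm, mul_assoc]

lemma aux_integral_sum_smul {H : Type*} [NormedAddCommGroup H] [InnerProductSpace ℂ H]
    [FiniteDimensional ℂ H] {ι : Type*} [Fintype ι] (a c : ℝ) (φ : ι → ℝ → ℂ)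
    (A : ι → (H →L[ℂ] H)) (hφ : ∀ j, Continuous (φ j)) :
    (∫ t in a..c, ∑ j, (φ j t) • A j) = ∑ j, (∫ t in a..c, φ j t) • A j := by
  rw [intervalIntegral.integral_finset_sum]
  · refine Finset.sum_congr rfl fun j _ => ?_
    rw [intervalIntegral.integral_smul_const]
  · intro j _
    exact (((hφ j).smul continuous_const)).intervalIntegrable _ _

set_option maxHeartbeats 1000000 in
/-- **Resolution of the identity by covariant clock states (normalization `μ = 1/t_max`).**
For a finite-dimensional clock with orthonormal eigenbasis `b`, rational spectrum
`ε j = (2π n_j + φ)/t_max` (the `n_j` distinct integers), and covariant clock states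
`|t⟩ = Σ_j e^{i g j} e^{-i ε_j t} b j`, one has
`(1/t_max) ∫₀^{t_max} |t⟩⟨t| dt = id`. -/
theorem clock_states_resolve_identity
    {H : Type*} [NormedAddCommGroup H] [InnerProductSpace ℂ H] [FiniteDimensional ℂ H]
    (n : ℕ) (hn : 1 ≤ n) (b : OrthonormalBasis (Fin n) ℂ H)
    (tmax φ : ℝ) (htmax : 0 < tmax)
    (nj : Fin n → ℤ) (hnj : Function.Injective nj)
    (g : Fin n → ℝ)
    (ε : Fin n → ℝ) (hε : ∀ j, ε j = (2 * Real.pi * (nj j : ℝ) + φ) / tmax)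
    (ct : ℝ → H)
    (hct : ∀ t : ℝ, ct t = ∑ j : Fin n,
      (Complex.exp (Complex.I * (g j : ℝ)) * Complex.exp (-Complex.I * (ε j : ℝ) * t)) • b j) :
    (1 / tmax) • (∫ t in (0:ℝ)..tmax, ketbra (ct t) (ct t)) = (1 : H →L[ℂ] H) := by
  set f : Fin n → ℝ → ℂ := fun j t =>
    Complex.exp (Complex.I * (g j : ℝ)) * Complex.exp (-Complex.I * (ε j : ℝ) * t) with hf
  have heq : ∀ (j k : Fin n) (t : ℝ), f j t * (starRingEnd ℂ) (f k t)
      = Complex.exp (Complex.I * ((g j : ℝ) - (g k : ℝ)))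
        * Complex.exp ((-Complex.I * ((ε j : ℝ) - (ε k : ℝ))) * t) := by
    intro j k t
    simp only [hf, map_mul, ← Complex.exp_conj, ← Complex.exp_add]
    congr 1
    simp [Complex.conj_I, Complex.conj_ofReal, map_mul]
    ring
  -- scalar integrals
  have hscal : ∀ j k : Fin n,
      (∫ t in (0:ℝ)..tmax, f j t * (starRingEnd ℂ) (f k t))
        = if j = k then (tmax : ℂ) else 0 := by
    intro j k
    simp only [heq]
    by_cases hjk : j = k
    · subst hjk
      simp
    · have hεne : ε j ≠ ε k := by
        intro h
        apply hjk; apply hnj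
        rw [hε j, hε k, div_eq_div_iff (ne_of_gt htmax) (ne_of_gt htmax)] at h
        have h3 := mul_right_cancel₀ (ne_of_gt htmax) h
        have h4 : 2 * Real.pi * (nj j : ℝ) = 2 * Real.pi * (nj k : ℝ) :=
          add_right_cancel h3
        have h2pi : (2 * Real.pi) ≠ 0 := by positivity
        have := mul_left_cancel₀ h2pi h4
        exact_mod_cast this
      have hc : (-Complex.I * ((ε j : ℝ) - (ε k : ℝ))) ≠ 0 := by
        refine mul_ne_zero (neg_ne_zero.mpr Complex.I_ne_zero) (sub_ne_zero.mpr ?_)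
        exact_mod_cast hεne
      rw [intervalIntegral.integral_const_mul, integral_exp_mul_complex hc]
      have hexp : Complex.exp ((-Complex.I * ((ε j : ℝ) - (ε k : ℝ))) * tmax) = 1 := by
        have harg : (ε j - ε k) * tmax = 2 * Real.pi * ((nj j : ℝ) - (nj k : ℝ)) := by
          rw [hε j, hε k]
          field_simp
          ring
        have h5 : (-Complex.I * ((ε j : ℝ) - (ε k : ℝ))) * tmax
            = ((-(nj j - nj k) : ℤ) : ℂ) * (2 * Real.pi * Complex.I) := by
          have : ((ε j : ℂ) - (ε k : ℝ)) * (tmax : ℝ)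
              = ((2 * Real.pi * ((nj j : ℝ) - (nj k : ℝ)) : ℝ) : ℂ) := by
            push_cast [← harg]; ring
          rw [mul_assoc, this]
          push_cast
          ring
        rw [h5, Complex.exp_int_mul_two_pi_mul_I]
      rw [hexp]
      simp [hjk]
  -- expand the integrand
  have hcont2 : ∀ j k : Fin n, Continuous fun t =>
      (f j t * (starRingEnd ℂ) (f k t)) := by
    intro j k
    apply Continuous.mul
    · exact continuous_const.mul ((Complex.continuous_exp).comp (by continuity))
    · exact Complex.continuous_conj.comp
        (continuous_const.mul ((Complex.continuous_exp).comp (by continuity)))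
  have hint : (∫ t in (0:ℝ)..tmax, ketbra (ct t) (ct t))
      = ∑ j, ∑ k, (∫ t in (0:ℝ)..tmax, f j t * (starRingEnd ℂ) (f k t)) •
          ketbra (b j) (b k) := by
    have hexpand : ∀ t : ℝ, ketbra (ct t) (ct t)
        = ∑ p : Fin n × Fin n,
            (f p.1 t * (starRingEnd ℂ) (f p.2 t)) • ketbra (b p.1) (b p.2) := by
      intro t
      rw [hct t, ketbra_expand (fun j => b j) (fun j => f j t) (fun j => f j t),
        ← Finset.sum_product']
      rfl
    have haux := aux_integral_sum_smul (H := H) (ι := Fin n × Fin n) (0:ℝ) tmax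
      (fun p t => f p.1 t * (starRingEnd ℂ) (f p.2 t))
      (fun p => ketbra (b p.1) (b p.2)) (fun p => hcont2 p.1 p.2)
    simp only [hexpand]
    rw [haux, ← Finset.sum_product']
    rfl
  have hsum : (∫ t in (0:ℝ)..tmax, ketbra (ct t) (ct t))
      = (tmax : ℂ) • ∑ j : Fin n, ketbra (b j) (b j) := by
    rw [hint, Finset.smul_sum]
    refine Finset.sum_congr rfl fun j _ => ?_
    rw [Finset.sum_eq_single j]
    · rw [hscal j j]; simp
    · intro k _ hk
      rw [hscal j k]
      simp [Ne.symm hk]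
    · simp
  rw [hsum]
  have hres : ∑ j : Fin n, ketbra (b j) (b j) = (1 : H →L[ℂ] H) := by
    ext x
    simp only [ContinuousLinearMap.sum_apply, ketbra_apply, ContinuousLinearMap.one_apply]
    exact b.sum_repr' x
  rw [hres, ← smul_assoc]
  have : ((1 / tmax : ℝ) • (tmax : ℂ)) = 1 := by
    rw [Complex.real_smul]
    push_cast
    field_simp
    exact div_self (by exact_mod_cast ne_of_gt htmax)
  rw [this, one_smul]

end
end

section
/- In the finite-dimensional discrete-spectrum clock setup, define for every Lebesgue-measurable set X ⊆ ℝ of finite measure the effect operator E(X) := (1/t_max) ∫_X |t⟩⟨t| dt (Bochner integral). Then the covariance condition of the clock POVM holds: for every such X and every s ∈ ℝ, U_C(s) ∘ E(X) ∘ U_C(s)⁻¹ = E(X + s), where X + s := {x + s : x ∈ X}. Moreover each E(X) is a positive operator. -/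
open MeasureTheory

noncomputable section

lemma continuous_ketbra {H : Type*} [NormedAddCommGroup H] [InnerProductSpace ℂ H]
    {X : Type*} [TopologicalSpace X] {f g : X → H} (hf : Continuous f) (hg : Continuous g) :
    Continuous fun x => ketbra (f x) (g x) := by
  have h1 : LipschitzWith 1 (fun v : H => ContinuousLinearMap.toSpanSingleton ℂ v) := by
    apply LipschitzWith.of_dist_le_mul
    intro v w
    rw [dist_eq_norm, dist_eq_norm, NNReal.coe_one, one_mul]
    have : ContinuousLinearMap.toSpanSingleton ℂ v - ContinuousLinearMap.toSpanSingleton ℂ w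
        = ContinuousLinearMap.toSpanSingleton ℂ (v - w) := by
      ext a
      simp [ContinuousLinearMap.toSpanSingleton_apply, smul_sub]
    rw [this, ContinuousLinearMap.norm_toSpanSingleton]
  exact Continuous.clm_comp (h1.continuous.comp hf) ((innerSL ℂ).continuous.comp hg)

lemma norm_ketbra_le {H : Type*} [NormedAddCommGroup H] [InnerProductSpace ℂ H]
    (v w : H) : ‖ketbra v w‖ ≤ ‖v‖ * ‖w‖ := by
  refine le_trans (ContinuousLinearMap.opNorm_comp_le _ _) ?_
  rw [ContinuousLinearMap.norm_toSpanSingleton, innerSL_apply_norm]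

lemma exp_apply_eigenvector {H : Type*} [NormedAddCommGroup H] [NormedSpace ℂ H] [CompleteSpace H]
    (A : H →L[ℂ] H) (v : H) (μ : ℂ) (h : A v = μ • v) :
    NormedSpace.exp A v = Complex.exp μ • v := by
  have hpow : ∀ k : ℕ, (A ^ k) v = μ ^ k • v := by
    intro k
    induction k with
    | zero => simp
    | succ k ih =>
      rw [pow_succ', ContinuousLinearMap.mul_apply, ih, _root_.map_smul, h, smul_smul, ← pow_succ]
  have hs : Summable fun k : ℕ => ((Nat.factorial k : ℂ)⁻¹) • A ^ k :=
    NormedSpace.expSeries_summable' (𝕂 := ℂ) A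
  have hs2 : Summable fun k : ℕ => ((Nat.factorial k : ℂ)⁻¹) • μ ^ k :=
    NormedSpace.expSeries_summable' (𝕂 := ℂ) μ
  have ht := (ContinuousLinearMap.apply ℂ H v).map_tsum hs
  rw [NormedSpace.exp_eq_tsum (𝕂 := ℂ)]
  simp only [ContinuousLinearMap.apply_apply] at ht
  rw [ht]
  have heq : ∀ k : ℕ, ((Nat.factorial k : ℂ)⁻¹ • A ^ k) v
      = (((Nat.factorial k : ℂ)⁻¹) * μ ^ k) • v := by
    intro k
    rw [ContinuousLinearMap.smul_apply, hpow, smul_smul]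
  rw [tsum_congr heq, Summable.tsum_smul_const (by simpa [smul_eq_mul] using hs2)]
  congr 1
  rw [Complex.exp_eq_exp_ℂ, NormedSpace.exp_eq_tsum (𝕂 := ℂ)]
  simp [smul_eq_mul]


/-- **Covariance and positivity of the clock POVM.**  For the finite-dimensional
discrete-spectrum clock with Hamiltonian `HC = Σ_j ε_j |b j⟩⟨b j|`, evolution
`U t = exp(-i t HC)` (so `U (-s)` is the inverse of `U s`), covariant clock states
`|t⟩ = Σ_j e^{i g j} e^{-i ε_j t} b j` and effect operators
`E X = (1/t_max) ∫_X |t⟩⟨t| dt`, one has for every measurable `X ⊆ ℝ` of finite measure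
and every `s ∈ ℝ`:  `U(s) E(X) U(s)⁻¹ = E(X + s)`, and `E X` is a positive operator. -/
theorem clock_povm_covariant_and_positive
    {H : Type*} [NormedAddCommGroup H] [InnerProductSpace ℂ H] [FiniteDimensional ℂ H]
    (n : ℕ) (hn : 1 ≤ n) (b : OrthonormalBasis (Fin n) ℂ H)
    (tmax φ : ℝ) (htmax : 0 < tmax)
    (nj : Fin n → ℤ) (hnj : Function.Injective nj)
    (g : Fin n → ℝ)
    (ε : Fin n → ℝ) (hε : ∀ j, ε j = (2 * Real.pi * (nj j : ℝ) + φ) / tmax)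
    (ct : ℝ → H)
    (hct : ∀ t : ℝ, ct t = ∑ j : Fin n,
      (Complex.exp (Complex.I * (g j : ℝ)) * Complex.exp (-Complex.I * (ε j : ℝ) * t)) • b j)
    (HC : H →L[ℂ] H) (hHC : HC = ∑ j : Fin n, ((ε j : ℝ) : ℂ) • ketbra (b j) (b j))
    (U : ℝ → (H →L[ℂ] H))
    (hU : ∀ t : ℝ, U t = NormedSpace.exp ((-(t : ℂ) * Complex.I) • HC))
    (E : Set ℝ → (H →L[ℂ] H))
    (hE : ∀ X : Set ℝ, E X = (1 / tmax) • ∫ t in X, ketbra (ct t) (ct t)) :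
    ∀ X : Set ℝ, MeasurableSet X → volume X < ⊤ →
      (∀ s : ℝ, (U s).comp ((E X).comp (U (-s))) = E ((fun x => x + s) '' X))
        ∧ (E X).IsPositive := by
  classical
  have hob : ∀ i j : Fin n, (inner ℂ (b i) (b j) : ℂ) = if i = j then 1 else 0 :=
    orthonormal_iff_ite.mp b.orthonormal
  -- eigenvectors of HC
  have hHCb : ∀ j, HC (b j) = ((ε j : ℝ) : ℂ) • b j := by
    intro j
    rw [hHC]
    simp only [ContinuousLinearMap.sum_apply, ContinuousLinearMap.smul_apply, ketbra,
      ContinuousLinearMap.comp_apply, innerSL_apply_apply, ContinuousLinearMap.toSpanSingleton_apply,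
      hob]
    simp [Finset.sum_ite_eq]
  -- action of U on basis
  have hUb : ∀ s : ℝ, ∀ j, U s (b j) =
      Complex.exp (-(s : ℂ) * Complex.I * ((ε j : ℝ) : ℂ)) • b j := by
    intro s j
    rw [hU]
    refine exp_apply_eigenvector _ _ _ ?_
    rw [ContinuousLinearMap.smul_apply, hHCb, smul_smul]
  -- action of U on clock states
  have hUct : ∀ s t : ℝ, U s (ct t) = ct (t + s) := by
    intro s t
    rw [hct, map_sum, hct]
    refine Finset.sum_congr rfl fun j _ => ?_
    rw [_root_.map_smul, hUb, smul_smul]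
    congr 1
    rw [mul_assoc]
    congr 1
    rw [← Complex.exp_add]
    congr 1
    push_cast
    ring
  -- inner products with basis vectors
  have hbct : ∀ (t : ℝ) (k : Fin n), (inner ℂ (b k) (ct t) : ℂ) =
      Complex.exp (Complex.I * (g k : ℝ)) * Complex.exp (-Complex.I * ((ε k : ℝ) : ℂ) * t) := by
    intro t k
    rw [hct, inner_sum]
    simp only [inner_smul_right, hob]
    simp [Finset.sum_ite_eq']
  -- key scalar identity
  have hkey : ∀ (s t : ℝ) (ψ : H),
      (inner ℂ (ct t) (U (-s) ψ) : ℂ) = inner ℂ (ct (t + s)) ψ := by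
    intro s t ψ
    conv_lhs => rw [← b.sum_repr ψ]
    conv_rhs => rw [← b.sum_repr ψ]
    rw [map_sum, inner_sum, inner_sum]
    refine Finset.sum_congr rfl fun k _ => ?_
    rw [_root_.map_smul, inner_smul_right, inner_smul_right, hUb, inner_smul_right]
    rw [← inner_conj_symm (ct t) (b k), ← inner_conj_symm (ct (t+s)) (b k), hbct, hbct]
    congr 1
    simp only [map_mul, ← Complex.exp_conj, map_neg, map_add, map_sub, Complex.conj_I, Complex.conj_ofReal,
      ← Complex.exp_add]
    congr 1
    push_cast
    ring
  -- conjugation identity on integrand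
  have hconj : ∀ (s t : ℝ),
      (U s).comp ((ketbra (ct t) (ct t)).comp (U (-s))) = ketbra (ct (t + s)) (ct (t + s)) := by
    intro s t
    ext ψ
    simp only [ContinuousLinearMap.comp_apply, ketbra, innerSL_apply_apply,
      ContinuousLinearMap.toSpanSingleton_apply]
    rw [_root_.map_smul, hUct, hkey]
  -- continuity and integrability
  have hct_cont : Continuous ct := by
    have : ct = fun t : ℝ => ∑ j : Fin n,
        (Complex.exp (Complex.I * (g j : ℝ)) * Complex.exp (-Complex.I * (ε j : ℝ) * (t : ℂ))) • b j :=
      funext hct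
    rw [this]
    refine continuous_finset_sum _ fun j _ => Continuous.smul ?_ continuous_const
    fun_prop
  have hK_cont : Continuous fun t => ketbra (ct t) (ct t) := continuous_ketbra hct_cont hct_cont
  have hctn : ∀ t : ℝ, ‖ct t‖ ≤ (n : ℝ) := by
    intro t
    rw [hct]
    refine le_trans (norm_sum_le _ _) ?_
    have : ∀ j : Fin n, ‖(Complex.exp (Complex.I * (g j : ℝ))
        * Complex.exp (-Complex.I * (ε j : ℝ) * t)) • b j‖ = 1 := by
      intro j
      rw [norm_smul, b.orthonormal.1 j, mul_one, norm_mul,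
        Complex.norm_exp, Complex.norm_exp]
      simp [Complex.mul_re]
    simp only [neg_mul] at this ⊢
    rw [Finset.sum_congr rfl fun j _ => this j]
    simp
  have hInt : ∀ X : Set ℝ, MeasurableSet X → volume X < ⊤ →
      IntegrableOn (fun t => ketbra (ct t) (ct t)) X := by
    intro X hX hXfin
    haveI : IsFiniteMeasure (volume.restrict X) :=
      ⟨by rwa [Measure.restrict_apply_univ]⟩
    refine ⟨hK_cont.aestronglyMeasurable.restrict, ?_⟩
    refine HasFiniteIntegral.of_bounded (C := (n : ℝ) * n) ?_
    refine Filter.Eventually.of_forall fun t => ?_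
    exact le_trans (norm_ketbra_le _ _) (mul_le_mul (hctn t) (hctn t) (norm_nonneg _)
      (Nat.cast_nonneg n))
  intro X hX hXfin
  constructor
  · -- covariance
    intro s
    rw [hE, hE]
    rw [ContinuousLinearMap.smul_comp, ContinuousLinearMap.comp_smul]
    congr 1
    have hL : (U s).comp (((∫ t in X, ketbra (ct t) (ct t))).comp (U (-s)))
        = ∫ t in X, (U s).comp ((ketbra (ct t) (ct t)).comp (U (-s))) := by
      have hL2 := ((ContinuousLinearMap.compL ℂ H H H (U s)).comp
        ((ContinuousLinearMap.compL ℂ H H H).flip (U (-s)))).integral_comp_comm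
        (hInt X hX hXfin)
      simpa [ContinuousLinearMap.compL_apply, ContinuousLinearMap.flip_apply] using hL2.symm
    rw [hL]
    have h1 : (∫ t in X, (U s).comp ((ketbra (ct t) (ct t)).comp (U (-s))))
        = ∫ t in X, ketbra (ct (t + s)) (ct (t + s)) := by
      refine integral_congr_ae (Filter.Eventually.of_forall fun t => ?_)
      exact hconj s t
    rw [h1]
    -- translation
    have hmap : Measure.map (fun x : ℝ => x + s) volume = volume :=
      map_add_right_eq_self volume s
    have hemb : MeasurableEmbedding (fun x : ℝ => x + s) := measurableEmbedding_addRight s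
    rw [show ((fun x => x + s) '' X : Set ℝ) = (fun x => x + s) '' X from rfl]
    have := hemb.setIntegral_map (μ := volume) (fun u => ketbra (ct u) (ct u))
      ((fun x : ℝ => x + s) '' X)
    rw [hmap, Set.preimage_image_eq _ (add_left_injective s)] at this
    exact this.symm
  · -- positivity
    rw [ContinuousLinearMap.isPositive_iff_complex]
    intro x
    have hint := hInt X hX hXfin
    have hg : Integrable (fun t => (ketbra (ct t) (ct t)) x) (volume.restrict X) :=
      hint.apply_continuousLinearMap x
    have h2 : (inner ℂ ((E X) x) x : ℂ)
        = ((1 / tmax * ∫ t in X, Complex.normSq (inner ℂ (ct t) x : ℂ)) : ℝ) := by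
      rw [hE, ContinuousLinearMap.smul_apply,
        ContinuousLinearMap.integral_apply hint,
        RCLike.real_smul_eq_coe_smul (K := ℂ), inner_smul_left, RCLike.conj_ofReal]
      have h3 : (inner ℂ (∫ t in X, (ketbra (ct t) (ct t)) x) x : ℂ)
          = ∫ t in X, (inner ℂ ((ketbra (ct t) (ct t)) x) x : ℂ) := by
        calc (inner ℂ (∫ t in X, (ketbra (ct t) (ct t)) x) x : ℂ)
            = starRingEnd ℂ (inner ℂ x (∫ t in X, (ketbra (ct t) (ct t)) x) : ℂ) :=
              (inner_conj_symm _ _).symm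
          _ = starRingEnd ℂ (∫ t in X, (inner ℂ x ((ketbra (ct t) (ct t)) x) : ℂ)) := by
              rw [integral_inner hg x]
          _ = ∫ t in X, starRingEnd ℂ (inner ℂ x ((ketbra (ct t) (ct t)) x) : ℂ) :=
              integral_conj.symm
          _ = ∫ t in X, (inner ℂ ((ketbra (ct t) (ct t)) x) x : ℂ) := by
              simp [inner_conj_symm]
      rw [h3]
      have h4 : ∀ t : ℝ, (inner ℂ ((ketbra (ct t) (ct t)) x) x : ℂ)
          = ((Complex.normSq (inner ℂ (ct t) x : ℂ) : ℝ) : ℂ) := by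
        intro t
        simp only [ketbra, ContinuousLinearMap.comp_apply, innerSL_apply_apply,
          ContinuousLinearMap.toSpanSingleton_apply]
        rw [inner_smul_left]
        rw [mul_comm, Complex.mul_conj]
      have h5 : ∫ t in X, ((Complex.normSq (inner ℂ (ct t) x : ℂ) : ℝ) : ℂ)
          = (((∫ t in X, Complex.normSq (inner ℂ (ct t) x : ℂ)) : ℝ) : ℂ) := integral_ofReal
      rw [integral_congr_ae (Filter.Eventually.of_forall h4), Complex.ofReal_mul, h5]
      rfl
    rw [h2]
    have hnn : 0 ≤ 1 / tmax * ∫ t in X, Complex.normSq (inner ℂ (ct t) x : ℂ) :=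
      mul_nonneg (by positivity) (integral_nonneg fun t => Complex.normSq_nonneg _)
    constructor
    · simp
    · simpa using hnn

end
end

section
/- Let H, T̃ : ℝ² → ℝ be differentiable functions on the phase space ℝ², let u : ℝ → ℝ be differentiable, and suppose that on an open set Ω ⊆ ℝ² one has {T̃, H} = u ∘ H and u(H(x)) ≠ 0 for all x ∈ Ω. Then the rescaled clock function T := T̃ / (u ∘ H) is canonically conjugate to the clock Hamiltonian on Ω: {T, H}(x) = 1 for every x ∈ Ω. (This is the paper's construction of a clock function conjugate to H_C from a clock function whose bracket with H_C is a constant of motion.) -/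
noncomputable section

/-- The Poisson bracket of two differentiable functions on the phase space `ℝ²` with
canonical coordinates `(q, p)`:
`{f, g} = (∂f/∂q)(∂g/∂p) - (∂f/∂p)(∂g/∂q)`. -/
noncomputable def poissonBracket (f g : ℝ × ℝ → ℝ) (x : ℝ × ℝ) : ℝ :=
  fderiv ℝ f x (1, 0) * fderiv ℝ g x (0, 1) - fderiv ℝ f x (0, 1) * fderiv ℝ g x (1, 0)

/-- **Construction of a canonically conjugate clock function.**  If `{T̃, H} = u ∘ H` on an
open set `Ω ⊆ ℝ²` with `u(H x) ≠ 0` there, then the rescaled clock `T := T̃ / (u ∘ H)` is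
canonically conjugate to `H` on `Ω`: `{T, H} = 1`. -/
theorem rescaled_clock_canonically_conjugate
    (Ham Tt : ℝ × ℝ → ℝ) (u : ℝ → ℝ)
    (hHam : Differentiable ℝ Ham) (hTt : Differentiable ℝ Tt) (hu : Differentiable ℝ u)
    (Ω : Set (ℝ × ℝ)) (hΩ : IsOpen Ω)
    (hbr : ∀ x ∈ Ω, poissonBracket Tt Ham x = u (Ham x))
    (hne : ∀ x ∈ Ω, u (Ham x) ≠ 0) :
    ∀ x ∈ Ω, poissonBracket (fun y => Tt y / u (Ham y)) Ham x = 1 := by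
  intro x hx
  have hgx : u (Ham x) ≠ 0 := hne x hx
  have hT' : HasFDerivAt Tt (fderiv ℝ Tt x) x := (hTt x).hasFDerivAt
  have hH' : HasFDerivAt Ham (fderiv ℝ Ham x) x := (hHam x).hasFDerivAt
  have hu' : HasDerivAt u (deriv u (Ham x)) (Ham x) := (hu (Ham x)).hasDerivAt
  have hv : HasDerivAt (fun t => (u t)⁻¹) (-deriv u (Ham x) / u (Ham x) ^ 2) (Ham x) :=
    hu'.inv hgx
  have hg : HasFDerivAt (fun y => (u (Ham y))⁻¹)
      ((-deriv u (Ham x) / u (Ham x) ^ 2) • fderiv ℝ Ham x) x :=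
    hv.comp_hasFDerivAt x hH'
  have hdiv : HasFDerivAt (fun y => Tt y / u (Ham y))
      (Tt x • ((-deriv u (Ham x) / u (Ham x) ^ 2) • fderiv ℝ Ham x) +
        (u (Ham x))⁻¹ • fderiv ℝ Tt x) x := by
    simp only [div_eq_mul_inv]
    exact hT'.mul hg
  have hbrx := hbr x hx
  unfold poissonBracket at hbrx ⊢
  rw [hdiv.fderiv]
  simp only [ContinuousLinearMap.add_apply, ContinuousLinearMap.smul_apply, smul_eq_mul]
  field_simp
  linear_combination (u (Ham x)) * hbrx

end
end

section
/- Let m, a₁, a₂ > 0 and let H(q, p) := p²/(2m) + a₁ e^{a₂ q} be the exponential-potential clock Hamiltonian on ℝ². On the open set Ω := {(q, p) ∈ ℝ² : p ≠ 0}, define the clock function T(q, p) := −√(2m/p²) · ( p / (a₂ √(H(q,p))) ) · arcoth( √( 2m H(q,p) / p² ) ), where arcoth(x) := (1/2) ln( (x+1)/(x−1) ) for x > 1 (note that 2m H(q,p)/p² > 1 on Ω, so T is well defined). Then T is canonically conjugate to H on Ω: {T, H}(q, p) = 1 for every (q, p) with p ≠ 0. -/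
set_option maxHeartbeats 1600000


noncomputable section

/-- The inverse hyperbolic cotangent, `arcoth x = (1/2) ln((x+1)/(x-1))` for `x > 1`. -/
noncomputable def arcoth (x : ℝ) : ℝ := (1 / 2) * Real.log ((x + 1) / (x - 1))

private lemma hasFDerivAt_invComp {f : ℝ × ℝ → ℝ} {f' : ℝ × ℝ →L[ℝ] ℝ} {x : ℝ × ℝ}
    (hf : HasFDerivAt f f' x) (h : f x ≠ 0) :
    HasFDerivAt (fun y => (f y)⁻¹) ((-(f x ^ 2)⁻¹) • f') x :=
  (hasDerivAt_inv h).comp_hasFDerivAt x hf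

/-- **Covariant clock function for the exponential-potential clock Hamiltonian.**
For `H(q,p) = p²/(2m) + a₁ e^{a₂ q}` and
`T(q,p) = -√(2m/p²) (p/(a₂ √H)) arcoth(√(2mH/p²))`, one has `{T, H} = 1` wherever `p ≠ 0`. -/
theorem exponential_potential_clock_conjugate
    (m a1 a2 : ℝ) (hm : 0 < m) (ha1 : 0 < a1) (ha2 : 0 < a2)
    (Ham : ℝ × ℝ → ℝ)
    (hHam : ∀ x : ℝ × ℝ, Ham x = x.2 ^ 2 / (2 * m) + a1 * Real.exp (a2 * x.1))
    (T : ℝ × ℝ → ℝ)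
    (hT : ∀ x : ℝ × ℝ, T x =
      -Real.sqrt (2 * m / x.2 ^ 2) * (x.2 / (a2 * Real.sqrt (Ham x)))
        * arcoth (Real.sqrt (2 * m * Ham x / x.2 ^ 2))) :
    ∀ x : ℝ × ℝ, x.2 ≠ 0 → poissonBracket T Ham x = 1 := by
  intro x hp
  obtain ⟨q, p⟩ := x
  simp only at hp
  -- sign
  set s : ℝ := if 0 < p then 1 else -1 with hs_def
  have hs : s = 1 ∨ s = -1 := by
    by_cases h : 0 < p <;> simp [hs_def, h]
  have hsp : 0 < s * p := by
    rcases lt_or_gt_of_ne hp with h | h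
    · have : s = -1 := by simp [hs_def, not_lt.mpr h.le, h.not_gt]
      rw [this]; linarith
    · have : s = 1 := by simp [hs_def, h]
      rw [this]; linarith
  have hss : s * s = 1 := by rcases hs with h | h <;> rw [h] <;> ring
  -- Hamiltonian as an explicit function
  set Hfun : ℝ × ℝ → ℝ := fun y => y.2 * y.2 * (2 * m)⁻¹ + a1 * Real.exp (a2 * y.1)
    with hHfun
  have hHamEq : Ham = Hfun := by
    funext y; rw [hHam]; simp only [hHfun]; ring
  have hHposAll : ∀ y : ℝ × ℝ, 0 < Hfun y := by
    intro y
    have h1 : 0 < a1 * Real.exp (a2 * y.1) := mul_pos ha1 (Real.exp_pos _)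
    have h2 : 0 ≤ y.2 * y.2 * (2 * m)⁻¹ :=
      mul_nonneg (mul_self_nonneg _) (inv_nonneg.mpr (by linarith))
    simp only [hHfun]; linarith
  set sm : ℝ := Real.sqrt (2 * m) with hsm_def
  have hsm_pos : 0 < sm := Real.sqrt_pos.mpr (by linarith)
  have hsm_sq : sm ^ 2 = 2 * m := Real.sq_sqrt (by linarith)
  -- value abbreviations at the point
  set Hv : ℝ := Hfun (q, p) with hHv_def
  have hHv_pos : 0 < Hv := hHposAll (q, p)
  set sh : ℝ := Real.sqrt Hv with hsh_def
  have hsh_pos : 0 < sh := Real.sqrt_pos.mpr hHv_pos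
  have hsh_sq : sh ^ 2 = Hv := Real.sq_sqrt hHv_pos.le
  -- local smooth formula
  set F : ℝ × ℝ → ℝ := fun y =>
    -(Real.sqrt (2 * m) * (s * y.2)⁻¹) * (y.2 * (a2 * Real.sqrt (Hfun y))⁻¹) *
      ((1 / 2) * Real.log
        ((Real.sqrt (2 * m) * Real.sqrt (Hfun y) * (s * y.2)⁻¹ + 1) *
          (Real.sqrt (2 * m) * Real.sqrt (Hfun y) * (s * y.2)⁻¹ - 1)⁻¹)) with hF_def
  -- T agrees with F near the point
  have habs : ∀ y : ℝ × ℝ, 0 < s * y.2 → |y.2| = s * y.2 := by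
    intro y hy
    rcases hs with h | h
    · rw [h] at hy ⊢; rw [one_mul] at hy ⊢; exact abs_of_pos hy
    · rw [h] at hy ⊢
      have : y.2 < 0 := by nlinarith
      rw [abs_of_neg this]; ring
  have hTF : T =ᶠ[nhds (q, p)] F := by
    have hopen : IsOpen {y : ℝ × ℝ | 0 < s * y.2} :=
      isOpen_lt continuous_const (continuous_const.mul continuous_snd)
    filter_upwards [hopen.mem_nhds hsp] with y hy
    have hy2 : y.2 ≠ 0 := by
      intro h; rw [h, mul_zero] at hy; exact lt_irrefl 0 hy
    have hsq : Real.sqrt (y.2 ^ 2) = s * y.2 := by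
      rw [Real.sqrt_sq_eq_abs]; exact habs y hy
    have h1 : Real.sqrt (2 * m / y.2 ^ 2) = Real.sqrt (2 * m) * (s * y.2)⁻¹ := by
      rw [Real.sqrt_div (by linarith) (y.2 ^ 2), hsq, div_eq_mul_inv]
    have h2 : Real.sqrt (2 * m * Ham y / y.2 ^ 2)
        = Real.sqrt (2 * m) * Real.sqrt (Hfun y) * (s * y.2)⁻¹ := by
      rw [hHamEq, Real.sqrt_div (mul_nonneg (by linarith) (hHposAll y).le : (0:ℝ) ≤ 2 * m * Hfun y) (y.2 ^ 2), hsq,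
        Real.sqrt_mul (by linarith : (0:ℝ) ≤ 2 * m), div_eq_mul_inv]
    rw [hT y, hF_def, arcoth, h1, h2, hHamEq]
    rw [div_eq_mul_inv y.2, div_eq_mul_inv _ (_ - 1)]
  -- derivatives
  have h_snd : HasFDerivAt (fun y : ℝ × ℝ => y.2) (ContinuousLinearMap.snd ℝ ℝ ℝ) (q, p) :=
    hasFDerivAt_snd
  have h_fst : HasFDerivAt (fun y : ℝ × ℝ => y.1) (ContinuousLinearMap.fst ℝ ℝ ℝ) (q, p) :=
    hasFDerivAt_fst
  have h_sp : HasFDerivAt (fun y : ℝ × ℝ => s * y.2) _ (q, p) := h_snd.const_mul s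
  have hsp_ne : s * p ≠ 0 := ne_of_gt hsp
  have h_spinv : HasFDerivAt (fun y : ℝ × ℝ => (s * y.2)⁻¹) _ (q, p) :=
    hasFDerivAt_invComp h_sp hsp_ne
  have hH : HasFDerivAt Hfun _ (q, p) :=
    ((h_snd.mul h_snd).mul_const (2 * m)⁻¹).add
      (((h_fst.const_mul a2).exp).const_mul a1)
  have hshd : HasFDerivAt (fun y : ℝ × ℝ => Real.sqrt (Hfun y)) _ (q, p) :=
    hH.sqrt (ne_of_gt hHv_pos)
  have hu : HasFDerivAt
      (fun y : ℝ × ℝ => Real.sqrt (2 * m) * Real.sqrt (Hfun y) * (s * y.2)⁻¹) _ (q, p) :=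
    (hshd.const_mul (Real.sqrt (2 * m))).mul h_spinv
  -- u > 1 at the point
  have hu_gt : 1 < Real.sqrt (2 * m) * Real.sqrt (Hv) * (s * p)⁻¹ := by
    have hVpos : 0 < a1 * Real.exp (a2 * q) := mul_pos ha1 (Real.exp_pos _)
    have key : s * p < Real.sqrt (2 * m) * Real.sqrt (Hv) := by
      rw [← Real.sqrt_mul (by linarith : (0:ℝ) ≤ 2 * m) Hv,
        Real.lt_sqrt hsp.le]
      have hHvE : Hv = p * p * (2 * m)⁻¹ + a1 * Real.exp (a2 * q) := rfl
      have e1 : 2 * m * (p * p * (2 * m)⁻¹ + a1 * Real.exp (a2 * q))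
          = p * p + 2 * m * (a1 * Real.exp (a2 * q)) := by
        field_simp
      have e2 : (s * p) ^ 2 = p * p := by
        have : (s * p) ^ 2 = (s * s) * (p * p) := by ring
        rw [this, hss, one_mul]
      rw [hHvE, e1, e2]
      nlinarith [mul_pos hm hVpos]
    calc (1:ℝ) = (s * p) * (s * p)⁻¹ := (mul_inv_cancel₀ hsp_ne).symm
      _ < Real.sqrt (2 * m) * Real.sqrt (Hv) * (s * p)⁻¹ :=
          mul_lt_mul_of_pos_right key (inv_pos.mpr hsp)
  have hu_sub_ne : Real.sqrt (2 * m) * Real.sqrt (Hv) * (s * p)⁻¹ - 1 ≠ 0 := by linarith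
  have hw : HasFDerivAt
      (fun y : ℝ × ℝ =>
        (Real.sqrt (2 * m) * Real.sqrt (Hfun y) * (s * y.2)⁻¹ + 1) *
          (Real.sqrt (2 * m) * Real.sqrt (Hfun y) * (s * y.2)⁻¹ - 1)⁻¹) _ (q, p) :=
    (hu.add_const 1).mul (hasFDerivAt_invComp (hu.sub_const 1) hu_sub_ne)
  have hw_ne :
      (Real.sqrt (2 * m) * Real.sqrt (Hv) * (s * p)⁻¹ + 1) *
        (Real.sqrt (2 * m) * Real.sqrt (Hv) * (s * p)⁻¹ - 1)⁻¹ ≠ 0 := by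
    have h1 : 0 < Real.sqrt (2 * m) * Real.sqrt (Hv) * (s * p)⁻¹ + 1 := by linarith
    have h2 : 0 < (Real.sqrt (2 * m) * Real.sqrt (Hv) * (s * p)⁻¹ - 1)⁻¹ := by
      apply inv_pos.mpr; linarith
    positivity
  have hlog : HasFDerivAt
      (fun y : ℝ × ℝ => Real.log
        ((Real.sqrt (2 * m) * Real.sqrt (Hfun y) * (s * y.2)⁻¹ + 1) *
          (Real.sqrt (2 * m) * Real.sqrt (Hfun y) * (s * y.2)⁻¹ - 1)⁻¹)) _ (q, p) :=
    hw.log hw_ne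
  have ha2sh_ne : a2 * Real.sqrt Hv ≠ 0 := by positivity
  have hF' : HasFDerivAt F _ (q, p) :=
    (((h_spinv.const_mul (Real.sqrt (2 * m))).neg).mul
      (h_snd.mul (hasFDerivAt_invComp (hshd.const_mul a2) ha2sh_ne))).mul
      (hlog.const_mul (1 / 2))
  have hdT : fderiv ℝ T (q, p) = fderiv ℝ F (q, p) := hTF.fderiv_eq
  rw [poissonBracket, hdT, hF'.fderiv, hHamEq, hH.fderiv]
  simp only [ContinuousLinearMap.add_apply, ContinuousLinearMap.smul_apply,
    ContinuousLinearMap.neg_apply, ContinuousLinearMap.coe_fst', ContinuousLinearMap.coe_snd',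
    smul_eq_mul, ContinuousLinearMap.coe_smul', Pi.smul_apply, Pi.mul_apply, Pi.neg_apply]
  simp only [mul_zero, mul_one, zero_add, add_zero, zero_mul, neg_zero]
  simp only [← hHv_def, ← hsh_def, ← hsm_def]
  have hm2 : 2 * m = sm * sm := by rw [← hsm_sq]; ring
  have hE : Real.exp (a2 * q) = (sh * sh - p * p * (sm * sm)⁻¹) / a1 := by
    have h1 : sh * sh = p * p * (2 * m)⁻¹ + a1 * Real.exp (a2 * q) := by
      rw [← pow_two, hsh_sq]
    rw [hm2] at h1
    rw [eq_div_iff ha1.ne']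
    linear_combination -h1
  have hne1 : sm * sh * (s * p)⁻¹ - 1 ≠ 0 := hu_sub_ne
  have hne2 : sm * sh * (s * p)⁻¹ + 1 ≠ 0 := by
    have : (1:ℝ) < sm * sh * (s * p)⁻¹ := hu_gt
    positivity
  rw [hm2, hE]
  clear_value s sm Hv sh
  clear hs_def hsm_def hHv_def hsh_def hF_def hHfun hTF hT hHam hdT hu_gt
  rcases hs with h | h
  · rw [h] at hne1 hne2 ⊢
    rw [one_mul] at hne1 hne2 ⊢
    have hd1 : sm * sh - p ≠ 0 := by
      intro hcon; apply hne1; field_simp; linarith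
    have hd2 : sm * sh + p ≠ 0 := by
      intro hcon; apply hne2; field_simp; linarith
    field_simp [hd1, hd2]
    ring
  · set r := -p with hr
    have hpr : p = -r := by rw [hr]; ring
    have hr0 : r ≠ 0 := by rw [hr]; simpa using hp
    rw [h, hpr] at hne1 hne2 ⊢
    clear_value r
    clear hpr hr hp
    simp only [neg_mul, mul_neg, neg_neg, neg_one_mul, one_mul, inv_neg, neg_add_rev,
      neg_sub, neg_neg] at hne1 hne2 ⊢
    have hd1 : sm * sh - r ≠ 0 := by
      intro hcon; apply hne1; field_simp; linarith
    have hd2 : sm * sh + r ≠ 0 := by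
      intro hcon; apply hne2; field_simp; linarith
    field_simp [hd1, hd2]
    ring

end
end
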